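/- Under the hypotheses S'(q) = −(3/2)((5/3)P(q) − q P'(q))/q², 0 < (5/3)P(q) − q P'(q) ≤ c q, and lim_{q→∞} S(q)=0, the entropy satisfies the bound 0 < S(q) ≤ (3c/2)(1/q) for all q > 0. -/

import Mathlib

/-- Under `S'(q) = −(3/2)((5/3)P(q) − q P'(q))/q²`, `0 < (5/3)P(q) − q P'(q) ≤ c`,
and `S(q) → 0` as `q → ∞`, one has `0 < S(q) ≤ (3c/2)/q` for all `q > 0`. -/
theorem stmt9 (P P' S : ℝ → ℝ) (c : ℝ) (hc : 0 < c)
    (hS : ∀ q : ℝ, 0 < q →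
      HasDerivAt S (-(3 / 2) * ((5 / 3) * P q - P' q * q) / q ^ 2) q)
    (hpos : ∀ q : ℝ, 0 < q → 0 < (5 / 3) * P q - q * P' q)
    (hbd : ∀ q : ℝ, 0 < q → (5 / 3) * P q - q * P' q ≤ c)
    (hlim : Filter.Tendsto S Filter.atTop (nhds 0)) :
    ∀ q : ℝ, 0 < q → 0 < S q ∧ S q ≤ (3 * c / 2) / q := by
  have hcont : ContinuousOn S (Set.Ioi 0) := fun x hx =>
    (hS x hx).continuousAt.continuousWithinAt
  have hanti : StrictAntiOn S (Set.Ioi 0) := by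
    apply strictAntiOn_of_deriv_neg (convex_Ioi 0) hcont
    intro x hx
    rw [interior_Ioi] at hx
    rw [(hS x hx).deriv]
    have hA : 0 < (5 / 3) * P x - P' x * x := by
      have := hpos x hx; linarith [this, (mul_comm x (P' x))]
    have hx2 : (0:ℝ) < x ^ 2 := pow_pos hx 2
    apply div_neg_of_neg_of_pos _ hx2
    nlinarith
  -- define g
  set g : ℝ → ℝ := fun q => S q - (3 * c / 2) / q with hg
  have hgd : ∀ x ∈ Set.Ioi (0:ℝ), HasDerivAt g
      (-(3 / 2) * ((5 / 3) * P x - P' x * x) / x ^ 2 + (3 * c / 2) / x ^ 2) x := by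
    intro x hx
    have hx0 : x ≠ 0 := ne_of_gt hx
    have h1 : HasDerivAt (fun q : ℝ => (3 * c / 2) / q) ((3 * c / 2) * (-(x ^ 2)⁻¹)) x := by
      simpa [div_eq_mul_inv] using (hasDerivAt_inv hx0).const_mul (3 * c / 2)
    have := (hS x hx).sub h1
    refine this.congr_deriv ?_
    ring
  have hgmono : MonotoneOn g (Set.Ioi 0) := by
    apply monotoneOn_of_deriv_nonneg (convex_Ioi 0)
    · intro x hx
      exact ((hgd x hx).continuousAt.continuousWithinAt)
    · intro x hx
      rw [interior_Ioi] at hx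
      exact ((hgd x hx).differentiableAt.differentiableWithinAt)
    · intro x hx
      rw [interior_Ioi] at hx
      rw [(hgd x hx).deriv]
      have hA : (5 / 3) * P x - P' x * x ≤ c := by
        have := hbd x hx; linarith [(mul_comm x (P' x))]
      have hx2 : (0:ℝ) < x ^ 2 := pow_pos hx 2
      rw [← add_div]
      apply div_nonneg _ (le_of_lt hx2)
      nlinarith
  have hglim : Filter.Tendsto g Filter.atTop (nhds 0) := by
    have h2 : Filter.Tendsto (fun q : ℝ => (3 * c / 2) / q) Filter.atTop (nhds 0) := by
      simpa [div_eq_mul_inv] using tendsto_inv_atTop_zero.const_mul (3 * c / 2)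
    simpa using hlim.sub h2
  intro q hq
  constructor
  · have h1 : S (q + 1) < S q := hanti hq (by simp; linarith) (by linarith)
    have h2 : (0:ℝ) ≤ S (q + 1) := by
      apply le_of_tendsto hlim
      filter_upwards [Filter.eventually_ge_atTop (q + 1)] with r hr
      rcases eq_or_lt_of_le hr with h | h
      · exact le_of_eq (by rw [h])
      · exact le_of_lt (hanti (by simp; linarith) (by simp; linarith) h)
    linarith
  · have h3 : g q ≤ 0 := by
      apply ge_of_tendsto hglim
      filter_upwards [Filter.eventually_ge_atTop q] with r hr
      exact hgmono (Set.mem_Ioi.mpr hq) (Set.mem_Ioi.mpr (lt_of_lt_of_le hq hr)) hr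
    have : S q - (3 * c / 2) / q ≤ 0 := h3
    linarith
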